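/- Let G = Q:L be a biextraspecial group and D a dent of G. Then D is abelian, and D is isomorphic either to the elementary abelian group 2⁴ or to C₄ × C₄. -/

import Mathlib

open scoped commutatorElement

set_option maxHeartbeats 1000000


/-- The centre of the subgroup `Q`, viewed as a subgroup of the ambient group `G`. -/
def centerOf (G : Type*) [Group G] (Q : Subgroup G) : Subgroup G :=
  Subgroup.centralizer (Q : Set G) ⊓ Q

/-- A biextraspecial group of rank `m`: `G` is an extension of a special 2-group
`Q` of order `2^(2+2m)` by `L₂(2) ≅ S₃`, the centre `Z = Z(Q) ≅ 2²` is the natural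
module (elementary abelian of order 4 with faithful induced `G/Q`-action), `Q/Z` is
elementary abelian, and every element of order 3 acts fixed-point-freely on `Q`
(equivalently, `Q/Z` has only natural composition factors). -/
structure IsBiextraspecial (G : Type*) [Group G] (Q : Subgroup G) (m : ℕ) : Prop where
  normal : Q.Normal
  card_Q : Nat.card Q = 2 ^ (2 + 2 * m)
  quot_iso : Nonempty ((G ⧸ Q) ≃* Equiv.Perm (Fin 3))
  card_center : Nat.card (centerOf G Q) = 4
  center_exponent : ∀ z ∈ centerOf G Q, z * z = 1
  center_faithful : ∀ g : G, (∀ z ∈ centerOf G Q, g * z * g⁻¹ = z) → g ∈ Q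
  sq_mem_center : ∀ q ∈ Q, q * q ∈ centerOf G Q
  comm_mem_center : ∀ q ∈ Q, ∀ r ∈ Q, ⁅q, r⁆ ∈ centerOf G Q
  order_three_fpf : ∀ g : G, orderOf g = 3 → ∀ q ∈ Q, g * q * g⁻¹ = q → q = 1

/-- A dent: a normal subgroup `D` of `G` with `Z(Q) < D < Q` such that `D/Z` is an
irreducible `L`-submodule of `Q/Z` (i.e. `D` is minimal among normal subgroups
strictly containing `Z(Q)`). -/
structure IsDent (G : Type*) [Group G] (Q D : Subgroup G) : Prop where
  normal : D.Normal
  center_lt : centerOf G Q < D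
  lt_Q : D < Q
  minimal : ∀ E : Subgroup G, E.Normal → centerOf G Q < E → E ≤ D → E = D

/-- `D₃` is the diagonal dent of the distinct dents `D₁` and `D₂`: the unique third
dent contained in `D₁D₂`. -/
def IsDiagonal (G : Type*) [Group G] (Q D₁ D₂ D₃ : Subgroup G) : Prop :=
  IsDent G Q D₁ ∧ IsDent G Q D₂ ∧ IsDent G Q D₃ ∧
    D₁ ≠ D₂ ∧ D₃ ≠ D₁ ∧ D₃ ≠ D₂ ∧ D₃ ≤ D₁ ⊔ D₂

/-- Two subgroups commute elementwise, i.e. `[D₁, D₂] = 1`. -/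
def DentsCommute (G : Type*) [Group G] (D₁ D₂ : Subgroup G) : Prop :=
  ∀ d₁ ∈ D₁, ∀ d₂ ∈ D₂, d₁ * d₂ = d₂ * d₁

/-- A dent is singular when it is elementary abelian (of type `2⁴`). -/
def IsSingularDent (G : Type*) [Group G] (D : Subgroup G) : Prop :=
  ∀ d ∈ D, d * d = 1

/-- A standard basis `x, y` of a dent `D` with respect to `L = ⟨s, t⟩`:
`D = ⟨x, y, Z⟩` with `xᵗ = x`, `xˢ = y` and `yˢ = xy` (singular case) or
`yˢ = x⁻¹y⁻¹` (non-singular case). -/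
structure StdBasis (G : Type*) [Group G] (Q : Subgroup G) (s t : G)
    (D : Subgroup G) (x y : G) : Prop where
  x_mem : x ∈ D
  x_notin : x ∉ centerOf G Q
  gen : D = centerOf G Q ⊔ Subgroup.closure {x, y}
  t_fix : t * x * t⁻¹ = x
  s_x : s * x * s⁻¹ = y
  s_y : s * y * s⁻¹ = x * y ∨ s * y * s⁻¹ = x⁻¹ * y⁻¹

set_option maxHeartbeats 1600000 in
private lemma perm3_conj : ∀ x y : Equiv.Perm (Fin 3), x^3 = 1 → x ≠ 1 → y^2 = 1 → y ≠ 1 →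
    y * x * y⁻¹ = x⁻¹ := by decide

set_option maxHeartbeats 1600000 in
private lemma perm3_cases : ∀ g x y : Equiv.Perm (Fin 3), x^3 = 1 → x ≠ 1 → y^2 = 1 → y ≠ 1 →
    g = 1 ∨ g = x ∨ g = x*x ∨ g = y ∨ g = x*y ∨ g = x*x*y := by decide

private lemma pow_mod_eq {G : Type*} [Group G] (v : G) {n : ℕ} (h : v ^ n = 1) (i : ℕ) :
    v ^ (i % n) = v ^ i := by
  conv_rhs => rw [← Nat.div_add_mod i n]
  rw [pow_add, pow_mul, h, one_pow, one_mul]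

private lemma mk_swap {G : Type*} [Group G] {a b : G} (hab : b * a = a * b) (x : G) :
    b * (a * x) = a * (b * x) := by rw [← mul_assoc, hab, mul_assoc]

private lemma pow_swap {G : Type*} [Group G] {x y : G} (h : y*x = x*y) (m n : ℕ) :
    y^m * x^n = x^n * y^m := ((show Commute y x from h).pow_pow m n)

private lemma pow_swap' {G : Type*} [Group G] {x y : G} (h : y*x = x*y) (m n : ℕ) (t : G) :
    y^m * (x^n * t) = x^n * (y^m * t) := mk_swap (pow_swap h m n) t

private lemma two_commuting_mul {G : Type*} [Group G] {p q : G} (hqp : q*p = p*q) (a a' b b' : ℕ) :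
    p^(a+a') * q^(b+b') = (p^a * q^b) * (p^a' * q^b') := by
  rw [pow_add, pow_add]
  simp only [mul_assoc, pow_swap hqp, pow_swap' hqp]

private lemma four_commuting_mul {G : Type*} [Group G] {p q r s : G}
    (hqp : q*p = p*q) (hrp : r*p = p*r) (hsp : s*p = p*s)
    (hrq : r*q = q*r) (hsq : s*q = q*s) (hsr : s*r = r*s)
    (a a' b b' c c' d d' : ℕ) :
    p^(a+a') * (q^(b+b') * (r^(c+c') * s^(d+d'))) =
      (p^a * (q^b * (r^c * s^d))) * (p^a' * (q^b' * (r^c' * s^d'))) := by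
  rw [pow_add, pow_add, pow_add, pow_add]
  simp only [mul_assoc, pow_swap hqp, pow_swap' hqp, pow_swap hrp, pow_swap' hrp,
    pow_swap hsp, pow_swap' hsp, pow_swap hrq, pow_swap' hrq, pow_swap hsq, pow_swap' hsq,
    pow_swap hsr, pow_swap' hsr]

private lemma closure_pair_mem {G : Type*} [Group G] {x y : G} (hx : x*x = 1) (hy : y*y = 1)
    (hc : x*y = y*x) {g : G} (hg : g ∈ Subgroup.closure ({x, y} : Set G)) :
    g = 1 ∨ g = x ∨ g = y ∨ g = x*y := by
  have k1 : x*(x*y) = y := by rw [← mul_assoc, hx, one_mul]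
  have k2 : y*(x*y) = x := by rw [hc, ← mul_assoc, hy, one_mul]
  have k3 : (x*y)*x = y := by rw [hc, mul_assoc, hx, mul_one]
  have k4 : (x*y)*y = x := by rw [mul_assoc, hy, mul_one]
  have k5 : (x*y)*(x*y) = 1 := by rw [mul_assoc, k2, hx]
  have ix : x⁻¹ = x := inv_eq_of_mul_eq_one_right hx
  have iy : y⁻¹ = y := inv_eq_of_mul_eq_one_right hy
  have ixy : (x*y)⁻¹ = x*y := inv_eq_of_mul_eq_one_right k5
  induction hg using Subgroup.closure_induction with
  | mem z hz => rcases hz with rfl | rfl <;> tauto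
  | one => exact Or.inl rfl
  | mul a b ha hb iha ihb =>
    rcases iha with rfl|rfl|rfl|rfl <;> rcases ihb with rfl|rfl|rfl|rfl <;>
      simp only [one_mul, mul_one, hx, hy, hc.symm, k1, k2, k3, k4, k5] <;> tauto
  | inv a ha iha =>
    rcases iha with rfl|rfl|rfl|rfl <;> simp only [inv_one, ix, iy, ixy] <;> tauto

private lemma zset_eq {G : Type*} [Group G] {Z : Subgroup G}
    (hncard : (Z : Set G).ncard = 4) {a b : G} (ha : a ∈ Z) (hb : b ∈ Z)
    (ha1 : a ≠ 1) (hb1 : b ≠ 1) (hab : a ≠ b) (hab1 : a*b ≠ 1)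
    (hfin : (Z : Set G).Finite) :
    ∀ z ∈ Z, z = 1 ∨ z = a ∨ z = b ∨ z = a*b := by
  have haab : a ≠ a*b := fun h => hb1 (left_eq_mul.mp h)
  have hbab : b ≠ a*b := fun h => ha1 (right_eq_mul.mp h)
  have hsub : ({1, a, b, a*b} : Set G) ⊆ (Z : Set G) := by
    rintro x (rfl|rfl|rfl|rfl)
    exacts [one_mem Z, ha, hb, mul_mem ha hb]
  have m1 : (1:G) ∉ ({a, b, a*b} : Set G) := by
    simp only [Set.mem_insert_iff, Set.mem_singleton_iff]
    push_neg
    exact ⟨Ne.symm ha1, Ne.symm hb1, Ne.symm hab1⟩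
  have m2 : a ∉ ({b, a*b} : Set G) := by
    simp only [Set.mem_insert_iff, Set.mem_singleton_iff]
    push_neg
    exact ⟨hab, haab⟩
  have m3 : b ∉ ({a*b} : Set G) := by simpa using hbab
  have hcard4 : ({1, a, b, a*b} : Set G).ncard = 4 := by
    rw [Set.ncard_insert_of_notMem m1, Set.ncard_insert_of_notMem m2,
      Set.ncard_insert_of_notMem m3, Set.ncard_singleton]
  have heq := Set.eq_of_subset_of_ncard_le hsub (le_of_eq (by rw [hncard, hcard4])) hfin
  intro z hz
  have hz' : z ∈ ({1, a, b, a*b} : Set G) := heq ▸ (hz : z ∈ (Z : Set G))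
  simpa using hz'

/-- every dent of a biextraspecial group is abelian, and is isomorphic
either to the elementary abelian group `2⁴` or to `C₄ × C₄`. -/
theorem stmt3 (G : Type*) [Group G] (Q D : Subgroup G) (m : ℕ)
    (hG : IsBiextraspecial G Q m) (hD : IsDent G Q D) :
    (∀ d₁ ∈ D, ∀ d₂ ∈ D, d₁ * d₂ = d₂ * d₁) ∧
      (Nonempty (D ≃* Multiplicative (ZMod 2 × ZMod 2 × ZMod 2 × ZMod 2)) ∨
        Nonempty (D ≃* Multiplicative (ZMod 4 × ZMod 4))) := by
  obtain ⟨hQnorm, hcardQ, ⟨e⟩, hcardZ, hZexp, hZfaith, hsq, hcommZ, hfpf⟩ := hG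

  haveI := hQnorm
  set Z : Subgroup G := centerOf G Q with hZdef
  have hZQ : Z ≤ Q := inf_le_right
  have hswap : ∀ z ∈ Z, ∀ q ∈ Q, q * z = z * q := by
    intro z hz q hq
    exact Subgroup.mem_centralizer_iff.mp (Subgroup.mem_inf.mp hz).1 q hq
  haveI hZnorm : Z.Normal := by
    constructor
    intro z hz g
    rw [hZdef] at hz ⊢
    rw [centerOf, Subgroup.mem_inf] at hz ⊢
    constructor
    · rw [Subgroup.mem_centralizer_iff]
      intro q hq
      have hq' : g⁻¹ * q * g ∈ Q := by
        have := hQnorm.conj_mem q hq g⁻¹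
        simpa using this
      have A := Subgroup.mem_centralizer_iff.mp hz.1 (g⁻¹ * q * g) hq'
      calc q * (g * z * g⁻¹) = g * ((g⁻¹ * q * g) * z) * g⁻¹ := by group
        _ = g * (z * (g⁻¹ * q * g)) * g⁻¹ := by rw [A]
        _ = (g * z * g⁻¹) * q := by group
    · exact hQnorm.conj_mem z hz.2 g
  have finQ : Finite ↥Q := Nat.finite_of_card_ne_zero (by rw [hcardQ]; positivity)
  have finZ : Finite ↥Z := Nat.finite_of_card_ne_zero (by rw [hcardZ]; norm_num)
  -- an element of order 3
  obtain ⟨x₀, hx₀3, hx₀1, y₀, hy₀2, hy₀1⟩ :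
      ∃ x : Equiv.Perm (Fin 3), x^3 = 1 ∧ x ≠ 1 ∧ ∃ y : Equiv.Perm (Fin 3), y^2 = 1 ∧ y ≠ 1 := by
    decide
  set ch : G ⧸ Q := e.symm x₀ with hchdef
  set ct : G ⧸ Q := e.symm y₀ with hctdef
  have hch3 : ch^3 = 1 := by rw [hchdef, ← map_pow, hx₀3, map_one]
  have hch1 : ch ≠ 1 := by
    intro hh
    exact hx₀1 (e.symm.injective (by rw [← hchdef, hh, map_one]))
  have hct2 : ct^2 = 1 := by rw [hctdef, ← map_pow, hy₀2, map_one]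
  have hct1 : ct ≠ 1 := by
    intro hh
    exact hy₀1 (e.symm.injective (by rw [← hctdef, hh, map_one]))
  have hconj : ct * ch * ct⁻¹ = ch⁻¹ := by
    have h0 := perm3_conj x₀ y₀ hx₀3 hx₀1 hy₀2 hy₀1
    have h1 := congrArg e.symm h0
    simpa [map_mul, map_inv, ← hchdef, ← hctdef] using h1
  obtain ⟨g₀, hg₀⟩ := QuotientGroup.mk'_surjective Q ch
  have hkerQ : ∀ x : G, (QuotientGroup.mk' Q) x = 1 ↔ x ∈ Q := by
    intro x; rw [← MonoidHom.mem_ker, QuotientGroup.ker_mk']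
  have hQeq : ∀ a b : G, (QuotientGroup.mk' Q) a = (QuotientGroup.mk' Q) b ↔ a⁻¹ * b ∈ Q := by
    intro a b
    rw [← hkerQ, map_mul, map_inv, inv_mul_eq_one]
  have hg₀3 : g₀^3 ∈ Q := by
    rw [← hkerQ, map_pow, hg₀, hch3]
  have hqn : (g₀^3)^(2^(2+2*m)) = 1 := by
    have h1 : orderOf (⟨g₀^3, hg₀3⟩ : ↥Q) ∣ 2^(2+2*m) := by
      rw [← hcardQ]; exact orderOf_dvd_natCard _
    have h2 : (⟨g₀^3, hg₀3⟩ : ↥Q)^(2^(2+2*m)) = 1 := orderOf_dvd_iff_pow_eq_one.mp h1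
    exact congrArg Subtype.val h2
  set h : G := g₀ ^ (2^(2+2*m)) with hhdef
  have hh3 : h^3 = 1 := by
    rw [hhdef, ← pow_mul, mul_comm, pow_mul]; exact hqn
  have hn3 : (2^(2+2*m)) % 3 = 1 := by
    have h4 : (2:ℕ)^(2+2*m) = 4^(1+m) := by
      rw [show 2+2*m = 2*(1+m) by ring, pow_mul]; norm_num
    rw [h4, Nat.pow_mod]; norm_num
  have hhQ : (QuotientGroup.mk' Q) h = ch := by
    rw [hhdef, map_pow, hg₀, ← pow_mod_eq ch hch3, hn3, pow_one]
  have hh1 : h ≠ 1 := by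
    intro hh; rw [hh, map_one] at hhQ; exact hch1 hhQ.symm
  haveI : Fact (Nat.Prime 3) := ⟨by norm_num⟩
  have hord : orderOf h = 3 := orderOf_eq_prime hh3 hh1
  have fpf : ∀ q ∈ Q, h * q * h⁻¹ = q → q = 1 := hfpf h hord
  -- the lift t
  obtain ⟨t, ht⟩ := QuotientGroup.mk'_surjective Q ct
  have ht2 : t*t ∈ Q := by
    rw [← hkerQ, map_mul, ht, ← pow_two, hct2]
  have hrel : ∃ q₁ ∈ Q, h * t = t * (h*h) * q₁ := by
    have e1 : ch * ch = ch⁻¹ := by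
      have h1 : (ch*ch)*ch = 1 := by
        have := hch3; rw [pow_succ, pow_two] at this; exact this
      exact eq_inv_of_mul_eq_one_left h1
    have e2 : ch * ct = ct * ch⁻¹ := by
      have h1 : ct * ch⁻¹ * ct⁻¹ = ch := by
        have h2 : ct * ch⁻¹ * ct⁻¹ = (ct * ch * ct⁻¹)⁻¹ := by group
        rw [h2, hconj, inv_inv]
      calc ch * ct = (ct * ch⁻¹ * ct⁻¹) * ct := by rw [h1]
        _ = ct * ch⁻¹ := by group
    have hmk : (QuotientGroup.mk' Q) (h*t) = (QuotientGroup.mk' Q) (t*(h*h)) := by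
      rw [map_mul, map_mul, map_mul, hhQ, ht, e1, ← e2]
    have hq1 := (hQeq _ _).mp hmk
    refine ⟨(t*(h*h))⁻¹ * (h*t), ?_, by group⟩
    · have : ((h*t)⁻¹ * (t*(h*h)))⁻¹ ∈ Q := inv_mem hq1
      simpa [mul_inv_rev] using this
  -- quotient by Z
  set π : G →* G ⧸ Z := QuotientGroup.mk' Z with hπdef
  have hπsurj : Function.Surjective π := QuotientGroup.mk'_surjective Z
  have hker : ∀ x : G, π x = 1 ↔ x ∈ Z := by
    intro x; rw [hπdef, ← MonoidHom.mem_ker, QuotientGroup.ker_mk']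
  have hπeq : ∀ a b : G, π a = π b ↔ a⁻¹ * b ∈ Z := by
    intro a b
    rw [← hker, map_mul, map_inv, inv_mul_eq_one]
  set QB : Subgroup (G ⧸ Z) := Subgroup.map π Q with hQBdef
  set DB : Subgroup (G ⧸ Z) := Subgroup.map π D with hDBdef
  have hDQ : D ≤ Q := le_of_lt hD.lt_Q
  have hZD : Z ≤ D := le_of_lt hD.center_lt
  have hDBQB : DB ≤ QB := Subgroup.map_mono hDQ
  haveI hDBnorm : DB.Normal := hD.normal.map π hπsurj
  haveI hQBnorm : QB.Normal := hQnorm.map π hπsurj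
  have hQB2 : ∀ x ∈ QB, x * x = 1 := by
    rintro x ⟨q, hq, rfl⟩
    rw [← map_mul, hker]
    exact hsq q hq
  have hQBcomm : ∀ x ∈ QB, ∀ y ∈ QB, x*y = y*x := by
    rintro x ⟨q, hq, rfl⟩ y ⟨r, hr, rfl⟩
    rw [← map_mul, ← map_mul]
    rw [hπeq]
    have h2 : (q*r)⁻¹ * (r*q) = ⁅r⁻¹, q⁻¹⁆ := by
      rw [commutatorElement_def]; group
    rw [h2]
    exact hcommZ r⁻¹ (inv_mem hr) q⁻¹ (inv_mem hq)
  -- fixed-point freeness modulo Z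
  have fpfZG : ∀ x ∈ Q, x⁻¹ * (h * x * h⁻¹) ∈ Z → x ∈ Z := by
    intro x hx hxz
    have hf : ∀ w : ↥Z, (w : G) * (h * (w : G)⁻¹ * h⁻¹) ∈ Z := by
      intro w
      exact mul_mem w.2 (hZnorm.conj_mem _ (inv_mem w.2) h)
    have hinj : Function.Injective (fun w : ↥Z => (⟨(w : G) * (h * (w : G)⁻¹ * h⁻¹), hf w⟩ : ↥Z)) := by
      intro w₁ w₂ hw
      have hw' : (w₁ : G) * (h * (w₁:G)⁻¹ * h⁻¹) = (w₂:G) * (h * (w₂:G)⁻¹ * h⁻¹) :=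
        congrArg Subtype.val hw
      have e1 : (w₂:G)⁻¹ * (w₁:G) = (h * (w₂:G)⁻¹ * h⁻¹) * (h * (w₁:G) * h⁻¹) := by
        calc (w₂:G)⁻¹ * (w₁:G)
            = (w₂:G)⁻¹ * ((w₁:G) * (h * (w₁:G)⁻¹ * h⁻¹)) * (h * (w₁:G) * h⁻¹) := by group
          _ = (w₂:G)⁻¹ * ((w₂:G) * (h * (w₂:G)⁻¹ * h⁻¹)) * (h * (w₁:G) * h⁻¹) := by rw [hw']
          _ = (h * (w₂:G)⁻¹ * h⁻¹) * (h * (w₁:G) * h⁻¹) := by group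
      have key : h * ((w₂:G)⁻¹ * (w₁:G)) * h⁻¹ = (w₂:G)⁻¹ * (w₁:G) := by
        calc h * ((w₂:G)⁻¹ * (w₁:G)) * h⁻¹
            = (h * (w₂:G)⁻¹ * h⁻¹) * (h * (w₁:G) * h⁻¹) := by group
          _ = (w₂:G)⁻¹ * (w₁:G) := e1.symm
      have h1 := fpf _ (hZQ (mul_mem (inv_mem w₂.2) w₁.2)) key
      exact Subtype.ext (inv_mul_eq_one.mp h1).symm
    have hsurjf := Finite.surjective_of_injective hinj
    obtain ⟨w, hw⟩ := hsurjf ⟨x⁻¹ * (h * x * h⁻¹), hxz⟩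
    have hw' : (w:G) * (h * (w:G)⁻¹ * h⁻¹) = x⁻¹ * (h * x * h⁻¹) := congrArg Subtype.val hw
    have hfix : h * (x * (w:G)) * h⁻¹ = x * (w:G) := by
      calc h * (x*(w:G)) * h⁻¹
          = x * (x⁻¹ * (h * x * h⁻¹)) * (h*(w:G)*h⁻¹) := by group
        _ = x * ((w:G) * (h * (w:G)⁻¹ * h⁻¹)) * (h*(w:G)*h⁻¹) := by rw [hw']
        _ = x * (w:G) := by group
    have h1 : x * (w:G) = 1 := fpf _ (mul_mem hx (hZQ w.2)) hfix
    have h2 : x = (w:G)⁻¹ := eq_inv_of_mul_eq_one_left h1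
    rw [h2]; exact inv_mem w.2
  have fpfQB : ∀ x ∈ QB, π h * x * (π h)⁻¹ = x → x = 1 := by
    rintro x ⟨q, hq, rfl⟩ hfix
    rw [hker]
    apply fpfZG q hq
    rw [← hπeq]
    have : π (h * q * h⁻¹) = π q := by simpa [map_mul] using hfix
    exact this.symm
  obtain ⟨q₁, hq₁mem, hq₁⟩ := hrel
  set hb : G ⧸ Z := π h with hbdef
  set tb : G ⧸ Z := π t with htbdef
  have hb3 : hb * (hb * hb) = 1 := by
    have e : h * (h * h) = 1 := by
      rw [← mul_assoc, ← pow_two, ← pow_succ]; exact hh3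
    calc hb * (hb * hb) = π (h*(h*h)) := by rw [hbdef]; simp [map_mul]
      _ = 1 := by rw [e, map_one]
  have R1 : ∀ x ∈ QB, hb * (tb * x * tb⁻¹) * hb⁻¹ = tb * (hb * (hb * x * hb⁻¹) * hb⁻¹) * tb⁻¹ := by
    intro x hx
    have hπrel : hb * tb = tb * (hb * hb) * π q₁ := by
      rw [hbdef, htbdef, ← map_mul, ← map_mul, ← map_mul, ← map_mul, hq₁]
    have hqx : π q₁ * x * (π q₁)⁻¹ = x := by
      rw [hQBcomm _ (Subgroup.mem_map_of_mem π hq₁mem) x hx, mul_inv_cancel_right]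
    calc hb * (tb * x * tb⁻¹) * hb⁻¹ = (hb*tb) * x * (hb*tb)⁻¹ := by group
      _ = (tb*(hb*hb)*(π q₁)) * x * (tb*(hb*hb)*(π q₁))⁻¹ := by rw [hπrel]
      _ = tb * (hb*(hb* ((π q₁) * x * (π q₁)⁻¹) *hb⁻¹)*hb⁻¹) * tb⁻¹ := by group
      _ = tb * (hb*(hb* x *hb⁻¹)*hb⁻¹) * tb⁻¹ := by rw [hqx]
  have R2 : ∀ x ∈ QB, tb * (tb * x * tb⁻¹) * tb⁻¹ = x := by
    intro x hx
    have h1 : π (t*t) * x * (π (t*t))⁻¹ = x := by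
      rw [hQBcomm _ (Subgroup.mem_map_of_mem π ht2) x hx, mul_inv_cancel_right]
    calc tb * (tb * x * tb⁻¹) * tb⁻¹ = π (t*t) * x * (π (t*t))⁻¹ := by
          rw [htbdef, map_mul]; group
      _ = x := h1
  have R3 : ∀ x : G ⧸ Z, hb * (hb * (hb * x * hb⁻¹) * hb⁻¹) * hb⁻¹ = x := by
    intro x
    calc hb * (hb * (hb * x * hb⁻¹) * hb⁻¹) * hb⁻¹
        = (hb*(hb*hb)) * x * (hb*(hb*hb))⁻¹ := by group
      _ = x := by rw [hb3]; group
  have T : ∀ x ∈ DB, x * (hb * x * hb⁻¹) * (hb * (hb * x * hb⁻¹) * hb⁻¹) = 1 := by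
    intro x hx
    have h1 : hb * x * hb⁻¹ ∈ DB := hDBnorm.conj_mem x hx hb
    have h2 : hb * (hb * x * hb⁻¹) * hb⁻¹ ∈ DB := hDBnorm.conj_mem _ h1 hb
    apply fpfQB _ (mul_mem (mul_mem (hDBQB hx) (hDBQB h1)) (hDBQB h2))
    have cA := hQBcomm x (hDBQB hx) _ (hDBQB h1)
    have cB := hQBcomm x (hDBQB hx) _ (hDBQB h2)
    calc hb * (x * (hb * x * hb⁻¹) * (hb * (hb * x * hb⁻¹) * hb⁻¹)) * hb⁻¹
        = (hb*x*hb⁻¹) * (hb*(hb*x*hb⁻¹)*hb⁻¹) * (hb*(hb*(hb*x*hb⁻¹)*hb⁻¹)*hb⁻¹) := by group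
      _ = (hb*x*hb⁻¹) * (hb*(hb*x*hb⁻¹)*hb⁻¹) * x := by rw [R3 x]
      _ = x * (hb * x * hb⁻¹) * (hb * (hb * x * hb⁻¹) * hb⁻¹) := by
          rw [mul_assoc, ← cB, ← mul_assoc, ← cA]
  -- choose v and then u
  obtain ⟨v, hvD, hvZ⟩ := SetLike.exists_of_lt hD.center_lt
  have claim : ∃ u, u ∈ D ∧ u ∉ Z ∧ tb * π u * tb⁻¹ = π u := by
    have hvQB : π v ∈ QB := Subgroup.mem_map_of_mem π (hDQ hvD)
    by_cases ha : π v * (tb * π v * tb⁻¹) = 1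
    · refine ⟨v, hvD, hvZ, ?_⟩
      have h2 : tb * π v * tb⁻¹ = (π v)⁻¹ := eq_inv_of_mul_eq_one_right ha
      have h3 : (π v)⁻¹ = π v := inv_eq_of_mul_eq_one_right (hQB2 _ hvQB)
      rw [h2, h3]
    · refine ⟨v * (t*v*t⁻¹), mul_mem hvD (hD.normal.conj_mem v hvD t), ?_, ?_⟩
      · intro hmem
        apply ha
        have h1 := (hker _).mpr hmem
        simpa [map_mul, ← htbdef] using h1
      · have hπa : π (v*(t*v*t⁻¹)) = π v * (tb * π v * tb⁻¹) := by
          simp [map_mul, ← htbdef]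
        have hR2 := R2 (π v) hvQB
        have hτvQB : tb * π v * tb⁻¹ ∈ QB := hQBnorm.conj_mem _ hvQB tb
        have hcm := hQBcomm (π v) hvQB _ hτvQB
        rw [hπa]
        calc tb * (π v * (tb * π v * tb⁻¹)) * tb⁻¹
            = (tb * π v * tb⁻¹) * (tb*(tb*(π v)*tb⁻¹)*tb⁻¹) := by group
          _ = (tb * π v * tb⁻¹) * π v := by rw [hR2]
          _ = π v * (tb * π v * tb⁻¹) := (hcm).symm
  obtain ⟨u, huD, huZ, hτu⟩ := claim
  set w : G := h * u * h⁻¹ with hwdef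
  have hwD : w ∈ D := hD.normal.conj_mem u huD h
  have huQ : u ∈ Q := hDQ huD
  have hwQ : w ∈ Q := hDQ hwD
  set ub : G ⧸ Z := π u with hubdef
  set wb : G ⧸ Z := π w with hwbdef
  have hwb : wb = hb * ub * hb⁻¹ := by
    rw [hwbdef, hwdef, hubdef, hbdef]; simp [map_mul]
  have hubQB : ub ∈ QB := Subgroup.mem_map_of_mem π huQ
  have hubDB : ub ∈ DB := Subgroup.mem_map_of_mem π huD
  have hwbQB : wb ∈ QB := Subgroup.mem_map_of_mem π hwQ
  have hwbDB : wb ∈ DB := Subgroup.mem_map_of_mem π hwD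
  have hub1 : ub ≠ 1 := fun hh => huZ ((hker u).mp hh)
  have hub2 : ub * ub = 1 := hQB2 _ hubQB
  have hwb2 : wb * wb = 1 := hQB2 _ hwbQB
  have iub : ub⁻¹ = ub := inv_eq_of_mul_eq_one_right hub2
  have iwb : wb⁻¹ = wb := inv_eq_of_mul_eq_one_right hwb2
  have hcomm_b : ub * wb = wb * ub := hQBcomm _ hubQB _ hwbQB
  have hwb1 : wb ≠ 1 := by
    intro hh
    apply hub1
    have : ub = hb⁻¹ * (hb * ub * hb⁻¹) * hb := by group
    rw [this, ← hwb, hh]; group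
  have hne : wb ≠ ub := by
    intro hh
    apply hub1
    apply fpfQB ub hubQB
    rw [← hwb]; exact hh
  have huw1 : ub * wb ≠ 1 := by
    intro hh
    apply hne
    rw [eq_inv_of_mul_eq_one_right hh]
    exact iub
  have hα2 : hb * (hb * ub * hb⁻¹) * hb⁻¹ = ub * wb := by
    have hT := T ub hubDB
    have h1 : hb * (hb * ub * hb⁻¹) * hb⁻¹ = (ub * (hb*ub*hb⁻¹))⁻¹ :=
      eq_inv_of_mul_eq_one_right hT
    rw [h1, ← hwb, mul_inv_rev, iub, iwb]
    exact hcomm_b.symm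
  have hconj_ub : hb * ub * hb⁻¹ = wb := hwb.symm
  have hconj_wb : hb * wb * hb⁻¹ = ub * wb := by rw [hwb]; exact hα2
  have hτw : tb * wb * tb⁻¹ = ub * wb := by
    have hR1 := R1 ub hubQB
    rw [hτu, hα2, ← hwb] at hR1
    have h2 : tb*(ub*wb)*tb⁻¹ = ub * (tb*wb*tb⁻¹) := by
      calc tb*(ub*wb)*tb⁻¹ = (tb*ub*tb⁻¹)*(tb*wb*tb⁻¹) := by group
        _ = ub * (tb*wb*tb⁻¹) := by rw [hτu]
    rw [h2] at hR1
    have h3 : ub⁻¹ * wb = tb*wb*tb⁻¹ := by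
      conv_lhs => rw [hR1]
      group
    rw [← h3, iub]
  -- the subgroup NB
  set NB : Subgroup (G ⧸ Z) := Subgroup.closure ({ub, wb} : Set (G ⧸ Z)) with hNBdef
  have hubNB : ub ∈ NB := Subgroup.subset_closure (by left; rfl)
  have hwbNB : wb ∈ NB := Subgroup.subset_closure (by right; rfl)
  have hmemN : ∀ g ∈ NB, g = 1 ∨ g = ub ∨ g = wb ∨ g = ub*wb := by
    intro g hg
    exact closure_pair_mem hub2 hwb2 hcomm_b hg
  have hNB_DB : NB ≤ DB := by
    rw [hNBdef]
    apply (Subgroup.closure_le _).mpr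
    rintro x (rfl | rfl)
    exacts [hubDB, hwbDB]
  have hconjh : ∀ g ∈ NB, hb * g * hb⁻¹ ∈ NB := by
    intro g hg
    rcases hmemN g hg with rfl|rfl|rfl|rfl
    · simpa using one_mem NB
    · rw [hconj_ub]; exact hwbNB
    · rw [hconj_wb]; exact mul_mem hubNB hwbNB
    · have e1 : hb*(ub*wb)*hb⁻¹ = ub := by
        calc hb*(ub*wb)*hb⁻¹ = (hb*ub*hb⁻¹)*(hb*wb*hb⁻¹) := by group
          _ = wb * (ub*wb) := by rw [hconj_ub, hconj_wb]
          _ = ub := by rw [hcomm_b, ← mul_assoc, hwb2, one_mul]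
      rw [e1]; exact hubNB
  have hτuw : tb * (ub*wb) * tb⁻¹ = wb := by
    calc tb*(ub*wb)*tb⁻¹ = (tb*ub*tb⁻¹)*(tb*wb*tb⁻¹) := by group
      _ = ub * (ub*wb) := by rw [hτu, hτw]
      _ = wb := by rw [← mul_assoc, hub2, one_mul]
  have hconjt : ∀ g ∈ NB, tb * g * tb⁻¹ ∈ NB := by
    intro g hg
    rcases hmemN g hg with rfl|rfl|rfl|rfl
    · simpa using one_mem NB
    · rw [hτu]; exact hubNB
    · rw [hτw]; exact mul_mem hubNB hwbNB
    · rw [hτuw]; exact hwbNB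
  have hconjq : ∀ q ∈ Q, ∀ g ∈ NB, π q * g * (π q)⁻¹ ∈ NB := by
    intro q hq g hg
    have hc := hQBcomm (π q) (Subgroup.mem_map_of_mem π hq) g (hDBQB (hNB_DB hg))
    rw [hc, mul_inv_cancel_right]
    exact hg
  have hNBnorm : NB.Normal := by
    constructor
    intro nn hnn g
    obtain ⟨g₀', rfl⟩ := hπsurj g
    have Pmul : ∀ r₁ r₂ : G, (∀ x ∈ NB, π r₁ * x * (π r₁)⁻¹ ∈ NB) →
        (∀ x ∈ NB, π r₂ * x * (π r₂)⁻¹ ∈ NB) →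
        ∀ x ∈ NB, π (r₁*r₂) * x * (π (r₁*r₂))⁻¹ ∈ NB := by
      intro r₁ r₂ p1 p2 x hx
      have e1 : π (r₁*r₂) * x * (π (r₁*r₂))⁻¹ = π r₁ * (π r₂ * x * (π r₂)⁻¹) * (π r₁)⁻¹ := by
        rw [map_mul]; group
      rw [e1]; exact p1 _ (p2 x hx)
    have Ph : ∀ x ∈ NB, π h * x * (π h)⁻¹ ∈ NB := by
      intro x hx; exact hconjh x hx
    have Pt : ∀ x ∈ NB, π t * x * (π t)⁻¹ ∈ NB := by
      intro x hx; exact hconjt x hx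
    -- decompose g₀'
    have hcase := perm3_cases (e ((QuotientGroup.mk' Q) g₀')) x₀ y₀ hx₀3 hx₀1 hy₀2 hy₀1
    have hmkr : ∃ r : G, (QuotientGroup.mk' Q) g₀' = (QuotientGroup.mk' Q) r ∧
        (∀ x ∈ NB, π r * x * (π r)⁻¹ ∈ NB) := by
      rcases hcase with hc|hc|hc|hc|hc|hc
      · refine ⟨1, ?_, ?_⟩
        · rw [map_one]
          apply e.injective; rw [hc, map_one]
        · intro x hx; simpa using hx
      · refine ⟨h, ?_, Ph⟩
        rw [hhQ, hchdef]
        apply e.injective; rw [hc]; simp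
      · refine ⟨h*h, ?_, Pmul h h Ph Ph⟩
        rw [map_mul, hhQ, hchdef]
        apply e.injective; rw [hc]; simp
      · refine ⟨t, ?_, Pt⟩
        rw [ht, hctdef]
        apply e.injective; rw [hc]; simp
      · refine ⟨h*t, ?_, Pmul h t Ph Pt⟩
        rw [map_mul, hhQ, ht, hchdef, hctdef]
        apply e.injective; rw [hc]; simp
      · refine ⟨h*h*t, ?_, Pmul (h*h) t (Pmul h h Ph Ph) Pt⟩
        rw [map_mul, map_mul, hhQ, ht, hchdef, hctdef]
        apply e.injective; rw [hc]; simp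
    obtain ⟨r, hmk, Pr⟩ := hmkr
    have hq' : r⁻¹ * g₀' ∈ Q := (hQeq r g₀').mp hmk.symm
    have e2 : π g₀' * nn * (π g₀')⁻¹ = π r * (π (r⁻¹*g₀') * nn * (π (r⁻¹*g₀'))⁻¹) * (π r)⁻¹ := by
      simp only [map_mul, map_inv]; group
    rw [e2]
    exact Pr _ (hconjq _ hq' nn hnn)
  -- minimality
  have hZE : Z < Subgroup.comap π NB := by
    rw [SetLike.lt_iff_le_and_exists]
    constructor
    · intro z hz
      show π z ∈ NB
      rw [(hker z).mpr hz]; exact one_mem NB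
    · exact ⟨u, hubNB, huZ⟩
  have hED : Subgroup.comap π NB ≤ D := by
    have h1 : Subgroup.comap π NB ≤ Subgroup.comap π DB := Subgroup.comap_mono hNB_DB
    rwa [hDBdef, Subgroup.comap_map_eq, hπdef, QuotientGroup.ker_mk', sup_of_le_left hZD] at h1
  have hE : Subgroup.comap π NB = D :=
    hD.minimal _ (Subgroup.Normal.comap hNBnorm π) hZE hED
  have hDBeq : DB = NB := by
    have h1 := congrArg (Subgroup.map π) hE
    rwa [Subgroup.map_comap_eq_self_of_surjective hπsurj, ← hDBdef, eq_comm] at h1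
  -- representation of elements of D
  have hDrep : ∀ d ∈ D, ∃ z ∈ Z, d = z ∨ d = u * z ∨ d = w * z ∨ d = u * w * z := by
    intro d hd
    have hdb : π d ∈ NB := hDBeq ▸ (Subgroup.mem_map_of_mem π hd)
    rcases hmemN _ hdb with h1|h1|h1|h1
    · exact ⟨d, (hker d).mp h1, Or.inl rfl⟩
    · refine ⟨u⁻¹ * d, (hπeq u d).mp h1.symm, Or.inr (Or.inl (by group))⟩
    · refine ⟨w⁻¹ * d, (hπeq w d).mp h1.symm, Or.inr (Or.inr (Or.inl (by group)))⟩
    · have h2 : π (u*w) = π d := by rw [map_mul]; exact h1.symm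
      exact ⟨(u*w)⁻¹ * d, (hπeq (u*w) d).mp h2, Or.inr (Or.inr (Or.inr (by group)))⟩
  -- u and w commute
  have comm_uw : u * w = w * u := by
    have hcZ : u*w*u⁻¹*w⁻¹ ∈ Z := by
      have := hcommZ u huQ w hwQ
      rwa [commutatorElement_def] at this
    have hk : ∃ z₀ ∈ Z, h*w*h⁻¹ = u*w*z₀ := by
      have h1 : π (u*w) = π (h*w*h⁻¹) := by
        have e3 : π (h*w*h⁻¹) = hb*wb*hb⁻¹ := by
          rw [hbdef, hwbdef]; simp [map_mul]
        rw [map_mul, e3, hconj_wb]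
      have h2 := (hπeq _ _).mp h1
      exact ⟨_, h2, by group⟩
    obtain ⟨z₀, hz₀, hk⟩ := hk
    have step : h*(u*w*u⁻¹*w⁻¹)*h⁻¹ = w*(u*w*z₀)*w⁻¹*(u*w*z₀)⁻¹ := by
      calc h*(u*w*u⁻¹*w⁻¹)*h⁻¹
          = (h*u*h⁻¹)*(h*w*h⁻¹)*(h*u*h⁻¹)⁻¹*(h*w*h⁻¹)⁻¹ := by group
        _ = w*(u*w*z₀)*w⁻¹*(u*w*z₀)⁻¹ := by rw [← hwdef, hk]
    have hzw : w⁻¹ * z₀ = z₀ * w⁻¹ := hswap z₀ hz₀ w⁻¹ (inv_mem hwQ)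
    have step2 : w*(u*w*z₀)*w⁻¹*(u*w*z₀)⁻¹ = w*u*w⁻¹*u⁻¹ := by
      calc w*(u*w*z₀)*w⁻¹*(u*w*z₀)⁻¹
          = w*u*(w*(z₀*w⁻¹)*z₀⁻¹)*w⁻¹*u⁻¹ := by group
        _ = w*u*(w*(w⁻¹*z₀)*z₀⁻¹)*w⁻¹*u⁻¹ := by rw [← hzw]
        _ = w*u*w⁻¹*u⁻¹ := by group
    have hcsq : (u*w*u⁻¹*w⁻¹)*(u*w*u⁻¹*w⁻¹) = 1 := hZexp _ hcZ
    have hinvc : w*u*w⁻¹*u⁻¹ = (u*w*u⁻¹*w⁻¹)⁻¹ := by group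
    have hfix2 : h*(u*w*u⁻¹*w⁻¹)*h⁻¹ = u*w*u⁻¹*w⁻¹ := by
      rw [step, step2, hinvc, inv_eq_of_mul_eq_one_right hcsq]
    have hc1 : u*w*u⁻¹*w⁻¹ = 1 := fpf _ (hZQ hcZ) hfix2
    have h2 : u*w = (u*w*u⁻¹*w⁻¹)*(w*u) := by group
    rw [hc1, one_mul] at h2
    exact h2
  -- D is abelian
  have hScomm : ∀ x ∈ ((Z : Set G) ∪ {u, w}), ∀ y ∈ ((Z : Set G) ∪ {u, w}), x*y = y*x := by
    rintro x (hx | hx) y (hy | hy)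
    · exact (hswap x hx y (hZQ hy)).symm
    · rcases hy with h | h
      · rw [h]; exact (hswap x hx u huQ).symm
      · rw [h]; exact (hswap x hx w hwQ).symm
    · rcases hx with h | h
      · rw [h]; exact hswap y hy u huQ
      · rw [h]; exact hswap y hy w hwQ
    · rcases hx with h | h <;> rcases hy with h' | h' <;> rw [h, h']
      · exact comm_uw
      · exact comm_uw.symm
  have hDsub : ∀ d ∈ D, d ∈ Subgroup.closure ((Z : Set G) ∪ {u, w}) := by
    intro d hd
    obtain ⟨z, hz, hcase⟩ := hDrep d hd
    have hzc : z ∈ Subgroup.closure ((Z : Set G) ∪ {u, w}) :=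
      Subgroup.subset_closure (Or.inl hz)
    have huc : u ∈ Subgroup.closure ((Z : Set G) ∪ {u, w}) :=
      Subgroup.subset_closure (Or.inr (by left; rfl))
    have hwc : w ∈ Subgroup.closure ((Z : Set G) ∪ {u, w}) :=
      Subgroup.subset_closure (Or.inr (by right; rfl))
    rcases hcase with rfl|rfl|rfl|rfl
    · exact hzc
    · exact mul_mem huc hzc
    · exact mul_mem hwc hzc
    · exact mul_mem (mul_mem huc hwc) hzc
  have hcent : Subgroup.closure ((Z : Set G) ∪ {u, w}) ≤
      Subgroup.centralizer ((Z : Set G) ∪ {u, w}) := by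
    apply (Subgroup.closure_le _).mpr
    intro s hs
    rw [SetLike.mem_coe, Subgroup.mem_centralizer_iff]
    intro y hy
    exact hScomm y hy s hs
  have habel : ∀ x ∈ Subgroup.closure ((Z : Set G) ∪ {u, w}),
      ∀ y ∈ Subgroup.closure ((Z : Set G) ∪ {u, w}), x * y = y * x := by
    intro x hx y hy
    induction hy using Subgroup.closure_induction with
    | mem s hs => exact (Subgroup.mem_centralizer_iff.mp (hcent hx) s hs).symm
    | one => simp
    | mul a b _ _ iha ihb => rw [← mul_assoc, iha, mul_assoc, ihb, ← mul_assoc]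
    | inv a _ iha => exact (Commute.inv_right iha)
  have conclusion1 : ∀ d₁ ∈ D, ∀ d₂ ∈ D, d₁ * d₂ = d₂ * d₁ := by
    intro d₁ h1 d₂ h2
    exact habel _ (hDsub _ h1) _ (hDsub _ h2)

  refine ⟨conclusion1, ?_⟩
  have hZsetfin : (Z : Set G).Finite := Set.toFinite _
  have hncard : (Z : Set G).ncard = 4 := by
    rw [← Nat.card_coe_set_eq]; exact hcardZ
  have hw_sq : w*w = h*(u*u)*h⁻¹ := by rw [hwdef]; group
  have huuZ : u*u ∈ Z := hsq u huQ
  by_cases hu2 : u*u = 1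
  · -- Case A : elementary abelian of order 16
    left
    have hww : w*w = 1 := by rw [hw_sq, hu2]; group
    obtain ⟨z₁, hz₁Z, hz₁1⟩ : ∃ z₁ ∈ Z, z₁ ≠ (1:G) := by
      by_contra hcon
      push_neg at hcon
      have hsub : (Z : Set G) ⊆ {1} := fun x hx => hcon x hx
      have hle := Set.ncard_le_ncard hsub (Set.finite_singleton 1)
      rw [hncard, Set.ncard_singleton] at hle
      omega
    obtain ⟨z₂, hz₂Z, hz₂1, hz₂z₁⟩ : ∃ z₂ ∈ Z, z₂ ≠ (1:G) ∧ z₂ ≠ z₁ := by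
      by_contra hcon
      push_neg at hcon
      have hsub : (Z : Set G) ⊆ {1, z₁} := by
        intro x hx
        rcases eq_or_ne x 1 with h1 | h1
        · exact Or.inl h1
        · exact Or.inr (hcon x hx h1)
      have hle := Set.ncard_le_ncard hsub (Set.toFinite _)
      have h2 : ({1, z₁} : Set G).ncard ≤ 2 := by
        refine le_trans (Set.ncard_insert_le _ _) ?_
        rw [Set.ncard_singleton]
      rw [hncard] at hle
      omega
    have hz₁z₂1 : z₁*z₂ ≠ 1 := fun hh => hz₂z₁
      ((eq_inv_of_mul_eq_one_right hh).trans (inv_eq_of_mul_eq_one_right (hZexp _ hz₁Z)))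
    have hZmem : ∀ z ∈ Z, z = 1 ∨ z = z₁ ∨ z = z₂ ∨ z = z₁*z₂ :=
      zset_eq hncard hz₁Z hz₂Z hz₁1 hz₂1 (Ne.symm hz₂z₁) hz₁z₂1 hZsetfin
    have sq1 : z₁^2 = 1 := by rw [pow_two]; exact hZexp _ hz₁Z
    have sq2 : z₂^2 = 1 := by rw [pow_two]; exact hZexp _ hz₂Z
    have squ : u^2 = 1 := by rw [pow_two]; exact hu2
    have sqw : w^2 = 1 := by rw [pow_two]; exact hww
    have c21 : z₂*z₁ = z₁*z₂ := hswap z₁ hz₁Z z₂ (hZQ hz₂Z)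
    have c31 : u*z₁ = z₁*u := hswap z₁ hz₁Z u huQ
    have c41 : w*z₁ = z₁*w := hswap z₁ hz₁Z w hwQ
    have c32 : u*z₂ = z₂*u := hswap z₂ hz₂Z u huQ
    have c42 : w*z₂ = z₂*w := hswap z₂ hz₂Z w hwQ
    have c43 : w*u = u*w := comm_uw.symm
    have hmemD : ∀ p : Multiplicative (ZMod 2 × ZMod 2 × ZMod 2 × ZMod 2),
        z₁ ^ (p.toAdd.1.val) * (z₂ ^ (p.toAdd.2.1.val) *
          (u ^ (p.toAdd.2.2.1.val) * w ^ (p.toAdd.2.2.2.val))) ∈ D := by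
      intro p
      exact mul_mem (pow_mem (hZD hz₁Z) _) (mul_mem (pow_mem (hZD hz₂Z) _)
        (mul_mem (pow_mem huD _) (pow_mem hwD _)))
    set f : Multiplicative (ZMod 2 × ZMod 2 × ZMod 2 × ZMod 2) →* ↥D :=
      MonoidHom.mk' (fun p => ⟨_, hmemD p⟩) (by
        intro a b
        apply Subtype.ext
        show z₁ ^ ((a.toAdd.1 + b.toAdd.1).val) * (z₂ ^ ((a.toAdd.2.1 + b.toAdd.2.1).val) *
            (u ^ ((a.toAdd.2.2.1 + b.toAdd.2.2.1).val) *
              w ^ ((a.toAdd.2.2.2 + b.toAdd.2.2.2).val))) =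
          (z₁ ^ (a.toAdd.1.val) * (z₂ ^ (a.toAdd.2.1.val) *
            (u ^ (a.toAdd.2.2.1.val) * w ^ (a.toAdd.2.2.2.val)))) *
          (z₁ ^ (b.toAdd.1.val) * (z₂ ^ (b.toAdd.2.1.val) *
            (u ^ (b.toAdd.2.2.1.val) * w ^ (b.toAdd.2.2.2.val))))
        rw [ZMod.val_add, ZMod.val_add, ZMod.val_add, ZMod.val_add,
          pow_mod_eq _ sq1, pow_mod_eq _ sq2, pow_mod_eq _ squ, pow_mod_eq _ sqw]
        exact four_commuting_mul c21 c31 c41 c32 c42 c43 _ _ _ _ _ _ _ _) with hfdef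
    have hinjf : Function.Injective f := by
      apply (injective_iff_map_eq_one f).mpr
      intro p hp
      have hp' : z₁ ^ (p.toAdd.1.val) * (z₂ ^ (p.toAdd.2.1.val) *
          (u ^ (p.toAdd.2.2.1.val) * w ^ (p.toAdd.2.2.2.val))) = 1 := congrArg Subtype.val hp
      have hq1 : ub ^ (p.toAdd.2.2.1.val) * wb ^ (p.toAdd.2.2.2.val) = 1 := by
        have h0 := congrArg π hp'
        simp only [map_mul, map_pow, map_one] at h0
        rw [(hker z₁).mpr hz₁Z, (hker z₂).mpr hz₂Z, one_pow, one_pow, one_mul, one_mul] at h0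
        rw [hubdef, hwbdef]
        exact h0
      have z2fact : ∀ x : ZMod 2, x.val = 0 → x = 0 := by decide
      have ha2 : p.toAdd.1.val < 2 := ZMod.val_lt _
      have hb2 : p.toAdd.2.1.val < 2 := ZMod.val_lt _
      have hc2 : p.toAdd.2.2.1.val < 2 := ZMod.val_lt _
      have hd2 : p.toAdd.2.2.2.val < 2 := ZMod.val_lt _
      rcases (by omega : p.toAdd.2.2.1.val = 0 ∨ p.toAdd.2.2.1.val = 1) with hc|hc <;>
        rcases (by omega : p.toAdd.2.2.2.val = 0 ∨ p.toAdd.2.2.2.val = 1) with hd|hd <;>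
        rw [hc, hd] at hq1 hp'
      · -- c = 0, d = 0
        simp only [pow_zero, mul_one] at hp'
        rcases (by omega : p.toAdd.1.val = 0 ∨ p.toAdd.1.val = 1) with ha|ha <;>
          rcases (by omega : p.toAdd.2.1.val = 0 ∨ p.toAdd.2.1.val = 1) with hb|hb <;>
          rw [ha, hb] at hp'
        · have h1 : p.toAdd.1 = 0 := z2fact _ ha
          have h2 : p.toAdd.2.1 = 0 := z2fact _ hb
          have h3 : p.toAdd.2.2.1 = 0 := z2fact _ hc
          have h4 : p.toAdd.2.2.2 = 0 := z2fact _ hd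
          have hp0 : p.toAdd = 0 := Prod.ext h1 (Prod.ext h2 (Prod.ext h3 h4))
          calc p = Multiplicative.ofAdd p.toAdd := rfl
            _ = Multiplicative.ofAdd 0 := by rw [hp0]
            _ = 1 := rfl
        · simp only [pow_zero, pow_one, one_mul, mul_one] at hp'
          exact absurd hp' hz₂1
        · simp only [pow_zero, pow_one, one_mul, mul_one] at hp'
          exact absurd hp' hz₁1
        · simp only [pow_one] at hp'
          exact absurd hp' hz₁z₂1
      · simp only [pow_zero, pow_one, one_mul, mul_one] at hq1
        exact absurd hq1 hwb1
      · simp only [pow_zero, pow_one, one_mul, mul_one] at hq1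
        exact absurd hq1 hub1
      · simp only [pow_one] at hq1
        exact absurd hq1 huw1
    have hsurjf : Function.Surjective f := by
      rintro ⟨d, hd⟩
      obtain ⟨z, hz, hcase⟩ := hDrep d hd
      have hzform := hZmem z hz
      have v20 : (0 : ZMod 2).val = 0 := rfl
      have v21 : (1 : ZMod 2).val = 1 := rfl
      have sw21 := mk_swap c21
      have sw31 := mk_swap c31
      have sw41 := mk_swap c41
      have sw32 := mk_swap c32
      have sw42 := mk_swap c42
      have v40 : (0 : ZMod 4).val = 0 := rfl
      have v41 : (1 : ZMod 4).val = 1 := rfl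
      have v42 : (2 : ZMod 4).val = 2 := rfl
      have v43 : (3 : ZMod 4).val = 3 := rfl
      have sw43 := mk_swap c43
      rcases hcase with rfl|rfl|rfl|rfl <;> rcases hzform with rfl|rfl|rfl|rfl
      · exact ⟨Multiplicative.ofAdd (0, 0, 0, 0), Subtype.ext (by
          simp [hfdef, v20, v21, c21, c31, c41, c32, c42, c43, sw21, sw31, sw41, sw32, sw42, sw43, mul_assoc])⟩
      · exact ⟨Multiplicative.ofAdd (1, 0, 0, 0), Subtype.ext (by
          simp [hfdef, v20, v21, c21, c31, c41, c32, c42, c43, sw21, sw31, sw41, sw32, sw42, sw43, mul_assoc])⟩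
      · exact ⟨Multiplicative.ofAdd (0, 1, 0, 0), Subtype.ext (by
          simp [hfdef, v20, v21, c21, c31, c41, c32, c42, c43, sw21, sw31, sw41, sw32, sw42, sw43, mul_assoc])⟩
      · exact ⟨Multiplicative.ofAdd (1, 1, 0, 0), Subtype.ext (by
          simp [hfdef, v20, v21, c21, c31, c41, c32, c42, c43, sw21, sw31, sw41, sw32, sw42, sw43, mul_assoc])⟩
      · exact ⟨Multiplicative.ofAdd (0, 0, 1, 0), Subtype.ext (by
          simp [hfdef, v20, v21, c21, c31, c41, c32, c42, c43, sw21, sw31, sw41, sw32, sw42, sw43, mul_assoc])⟩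
      · exact ⟨Multiplicative.ofAdd (1, 0, 1, 0), Subtype.ext (by
          simp [hfdef, v20, v21, c21, c31, c41, c32, c42, c43, sw21, sw31, sw41, sw32, sw42, sw43, mul_assoc])⟩
      · exact ⟨Multiplicative.ofAdd (0, 1, 1, 0), Subtype.ext (by
          simp [hfdef, v20, v21, c21, c31, c41, c32, c42, c43, sw21, sw31, sw41, sw32, sw42, sw43, mul_assoc])⟩
      · exact ⟨Multiplicative.ofAdd (1, 1, 1, 0), Subtype.ext (by
          simp [hfdef, v20, v21, c21, c31, c41, c32, c42, c43, sw21, sw31, sw41, sw32, sw42, sw43, mul_assoc])⟩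
      · exact ⟨Multiplicative.ofAdd (0, 0, 0, 1), Subtype.ext (by
          simp [hfdef, v20, v21, c21, c31, c41, c32, c42, c43, sw21, sw31, sw41, sw32, sw42, sw43, mul_assoc])⟩
      · exact ⟨Multiplicative.ofAdd (1, 0, 0, 1), Subtype.ext (by
          simp [hfdef, v20, v21, c21, c31, c41, c32, c42, c43, sw21, sw31, sw41, sw32, sw42, sw43, mul_assoc])⟩
      · exact ⟨Multiplicative.ofAdd (0, 1, 0, 1), Subtype.ext (by
          simp [hfdef, v20, v21, c21, c31, c41, c32, c42, c43, sw21, sw31, sw41, sw32, sw42, sw43, mul_assoc])⟩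
      · exact ⟨Multiplicative.ofAdd (1, 1, 0, 1), Subtype.ext (by
          simp [hfdef, v20, v21, c21, c31, c41, c32, c42, c43, sw21, sw31, sw41, sw32, sw42, sw43, mul_assoc])⟩
      · exact ⟨Multiplicative.ofAdd (0, 0, 1, 1), Subtype.ext (by
          simp [hfdef, v20, v21, c21, c31, c41, c32, c42, c43, sw21, sw31, sw41, sw32, sw42, sw43, mul_assoc])⟩
      · exact ⟨Multiplicative.ofAdd (1, 0, 1, 1), Subtype.ext (by
          simp [hfdef, v20, v21, c21, c31, c41, c32, c42, c43, sw21, sw31, sw41, sw32, sw42, sw43, mul_assoc])⟩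
      · exact ⟨Multiplicative.ofAdd (0, 1, 1, 1), Subtype.ext (by
          simp [hfdef, v20, v21, c21, c31, c41, c32, c42, c43, sw21, sw31, sw41, sw32, sw42, sw43, mul_assoc])⟩
      · exact ⟨Multiplicative.ofAdd (1, 1, 1, 1), Subtype.ext (by
          simp [hfdef, v20, v21, c21, c31, c41, c32, c42, c43, sw21, sw31, sw41, sw32, sw42, sw43, mul_assoc])⟩
    exact ⟨(MulEquiv.ofBijective f ⟨hinjf, hsurjf⟩).symm⟩
  · -- Case B : C4 × C4
    right
    have hcsq : (u*u)*(u*u) = 1 := hZexp _ huuZ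
    have hu4 : u^4 = 1 := by
      rw [show (4:ℕ) = 2*2 from rfl, pow_mul]
      simp only [pow_two]
      exact hcsq
    have hwwZ : w*w ∈ Z := hsq w hwQ
    have hw4 : w^4 = 1 := by
      rw [show (4:ℕ) = 2*2 from rfl, pow_mul]
      simp only [pow_two]
      exact hZexp _ hwwZ
    have hww1 : w*w ≠ 1 := by
      intro hh
      apply hu2
      have h5 : h*(u*u)*h⁻¹ = 1 := by rw [← hw_sq]; exact hh
      have h6 : u*u = h⁻¹*(h*(u*u)*h⁻¹)*h := by group
      rw [h5] at h6
      simpa using h6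
    have hneuw : u*u ≠ w*w := by
      intro hh
      apply hu2
      apply fpf _ (hZQ huuZ)
      rw [← hw_sq]
      exact hh.symm
    have huuww : (u*u)*(w*w) ≠ 1 := by
      intro hh
      apply hneuw
      rw [eq_inv_of_mul_eq_one_left hh]
      exact inv_eq_of_mul_eq_one_right (hZexp _ hwwZ)
    have hZmem : ∀ z ∈ Z, z = 1 ∨ z = u*u ∨ z = w*w ∨ z = (u*u)*(w*w) :=
      zset_eq hncard huuZ hwwZ hu2 hww1 hneuw huuww hZsetfin
    have c43 : w*u = u*w := comm_uw.symm
    have hmemD : ∀ p : Multiplicative (ZMod 4 × ZMod 4),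
        u ^ (p.toAdd.1.val) * w ^ (p.toAdd.2.val) ∈ D := by
      intro p
      exact mul_mem (pow_mem huD _) (pow_mem hwD _)
    set f : Multiplicative (ZMod 4 × ZMod 4) →* ↥D :=
      MonoidHom.mk' (fun p => ⟨_, hmemD p⟩) (by
        intro a b
        apply Subtype.ext
        show u ^ ((a.toAdd.1 + b.toAdd.1).val) * w ^ ((a.toAdd.2 + b.toAdd.2).val) =
          (u ^ (a.toAdd.1.val) * w ^ (a.toAdd.2.val)) *
          (u ^ (b.toAdd.1.val) * w ^ (b.toAdd.2.val))
        rw [ZMod.val_add, ZMod.val_add, pow_mod_eq _ hu4, pow_mod_eq _ hw4]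
        exact two_commuting_mul c43 _ _ _ _) with hfdef
    have pu2 : u^2 = u*u := pow_two u
    have pw2 : w^2 = w*w := pow_two w
    have pu3 : u^3 = u*(u*u) := by
      rw [show u^3 = u^2*u from pow_succ u 2, pow_two, mul_assoc]
    have pw3 : w^3 = w*(w*w) := by
      rw [show w^3 = w^2*w from pow_succ w 2, pow_two, mul_assoc]
    have hinjf : Function.Injective f := by
      apply (injective_iff_map_eq_one f).mpr
      intro p hp
      have hp' : u ^ (p.toAdd.1.val) * w ^ (p.toAdd.2.val) = 1 := congrArg Subtype.val hp
      have hq1 : ub ^ (p.toAdd.1.val) * wb ^ (p.toAdd.2.val) = 1 := by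
        have h0 := congrArg π hp'
        simp only [map_mul, map_pow, map_one] at h0
        rw [hubdef, hwbdef]
        exact h0
      have hub2' : ub^2 = 1 := by rw [pow_two]; exact hub2
      have hwb2' : wb^2 = 1 := by rw [pow_two]; exact hwb2
      have hq2 : ub ^ (p.toAdd.1.val % 2) * wb ^ (p.toAdd.2.val % 2) = 1 := by
        rw [pow_mod_eq _ hub2', pow_mod_eq _ hwb2']
        exact hq1
      have z4fact : ∀ x : ZMod 4, x.val = 0 → x = 0 := by decide
      have ha4 : p.toAdd.1.val < 4 := ZMod.val_lt _
      have hb4 : p.toAdd.2.val < 4 := ZMod.val_lt _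
      rcases Nat.mod_two_eq_zero_or_one (p.toAdd.1.val) with ha2|ha2 <;>
        rcases Nat.mod_two_eq_zero_or_one (p.toAdd.2.val) with hb2|hb2 <;>
        rw [ha2, hb2] at hq2
      · -- both even
        rcases (by omega : p.toAdd.1.val = 0 ∨ p.toAdd.1.val = 2) with ha|ha <;>
          rcases (by omega : p.toAdd.2.val = 0 ∨ p.toAdd.2.val = 2) with hb|hb <;>
          rw [ha, hb] at hp'
        · have h1 : p.toAdd.1 = 0 := z4fact _ ha
          have h2 : p.toAdd.2 = 0 := z4fact _ hb
          have hp0 : p.toAdd = 0 := Prod.ext h1 h2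
          calc p = Multiplicative.ofAdd p.toAdd := rfl
            _ = Multiplicative.ofAdd 0 := by rw [hp0]
            _ = 1 := rfl
        · simp only [pow_zero, pw2, one_mul] at hp'
          exact absurd hp' hww1
        · simp only [pow_zero, pu2, mul_one] at hp'
          exact absurd hp' hu2
        · simp only [pu2, pw2] at hp'
          exact absurd hp' huuww
      · simp only [pow_zero, pow_one, one_mul, mul_one] at hq2
        exact absurd hq2 hwb1
      · simp only [pow_zero, pow_one, one_mul, mul_one] at hq2
        exact absurd hq2 hub1
      · simp only [pow_one] at hq2
        exact absurd hq2 huw1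
    have hsurjf : Function.Surjective f := by
      rintro ⟨d, hd⟩
      obtain ⟨z, hz, hcase⟩ := hDrep d hd
      have hzform := hZmem z hz
      have v40 : (0 : ZMod 4).val = 0 := rfl
      have v41 : (1 : ZMod 4).val = 1 := rfl
      have v42 : (2 : ZMod 4).val = 2 := rfl
      have v43 : (3 : ZMod 4).val = 3 := rfl
      have sw43 := mk_swap c43
      rcases hcase with rfl|rfl|rfl|rfl <;> rcases hzform with rfl|rfl|rfl|rfl
      · exact ⟨Multiplicative.ofAdd (0, 0), Subtype.ext (by
          simp [hfdef, v40, v41, v42, v43, pu2, pw2, pu3, pw3, c43, sw43, mul_assoc])⟩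
      · exact ⟨Multiplicative.ofAdd (2, 0), Subtype.ext (by
          simp [hfdef, v40, v41, v42, v43, pu2, pw2, pu3, pw3, c43, sw43, mul_assoc])⟩
      · exact ⟨Multiplicative.ofAdd (0, 2), Subtype.ext (by
          simp [hfdef, v40, v41, v42, v43, pu2, pw2, pu3, pw3, c43, sw43, mul_assoc])⟩
      · exact ⟨Multiplicative.ofAdd (2, 2), Subtype.ext (by
          simp [hfdef, v40, v41, v42, v43, pu2, pw2, pu3, pw3, c43, sw43, mul_assoc])⟩
      · exact ⟨Multiplicative.ofAdd (1, 0), Subtype.ext (by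
          simp [hfdef, v40, v41, v42, v43, pu2, pw2, pu3, pw3, c43, sw43, mul_assoc])⟩
      · exact ⟨Multiplicative.ofAdd (3, 0), Subtype.ext (by
          simp [hfdef, v40, v41, v42, v43, pu2, pw2, pu3, pw3, c43, sw43, mul_assoc])⟩
      · exact ⟨Multiplicative.ofAdd (1, 2), Subtype.ext (by
          simp [hfdef, v40, v41, v42, v43, pu2, pw2, pu3, pw3, c43, sw43, mul_assoc])⟩
      · exact ⟨Multiplicative.ofAdd (3, 2), Subtype.ext (by
          simp [hfdef, v40, v41, v42, v43, pu2, pw2, pu3, pw3, c43, sw43, mul_assoc])⟩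
      · exact ⟨Multiplicative.ofAdd (0, 1), Subtype.ext (by
          simp [hfdef, v40, v41, v42, v43, pu2, pw2, pu3, pw3, c43, sw43, mul_assoc])⟩
      · exact ⟨Multiplicative.ofAdd (2, 1), Subtype.ext (by
          simp [hfdef, v40, v41, v42, v43, pu2, pw2, pu3, pw3, c43, sw43, mul_assoc])⟩
      · exact ⟨Multiplicative.ofAdd (0, 3), Subtype.ext (by
          simp [hfdef, v40, v41, v42, v43, pu2, pw2, pu3, pw3, c43, sw43, mul_assoc])⟩
      · exact ⟨Multiplicative.ofAdd (2, 3), Subtype.ext (by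
          simp [hfdef, v40, v41, v42, v43, pu2, pw2, pu3, pw3, c43, sw43, mul_assoc])⟩
      · exact ⟨Multiplicative.ofAdd (1, 1), Subtype.ext (by
          simp [hfdef, v40, v41, v42, v43, pu2, pw2, pu3, pw3, c43, sw43, mul_assoc])⟩
      · exact ⟨Multiplicative.ofAdd (3, 1), Subtype.ext (by
          simp [hfdef, v40, v41, v42, v43, pu2, pw2, pu3, pw3, c43, sw43, mul_assoc])⟩
      · exact ⟨Multiplicative.ofAdd (1, 3), Subtype.ext (by
          simp [hfdef, v40, v41, v42, v43, pu2, pw2, pu3, pw3, c43, sw43, mul_assoc])⟩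
      · exact ⟨Multiplicative.ofAdd (3, 3), Subtype.ext (by
          simp [hfdef, v40, v41, v42, v43, pu2, pw2, pu3, pw3, c43, sw43, mul_assoc])⟩
    exact ⟨(MulEquiv.ofBijective f ⟨hinjf, hsurjf⟩).symm⟩
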